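/- Let f : ℝ^d → ℝ be convex and continuously differentiable, let ν be a (σ-finite) measure on ℝ^d, and for m > 0 define F_m := {z ∈ ℝ^d | ∫ exp(−m·D_f(z, x)) dν(x) < ∞}. If 0 < m ≤ n, x₁ ∈ F_m, and x₀ ∈ ℝ^d is arbitrary, then (1 − m/n)·x₀ + (m/n)·x₁ ∈ F_n. -/

import Mathlib

open MeasureTheory

lemma convex_grad_ineq {E : Type*} [NormedAddCommGroup E] [InnerProductSpace ℝ E] [CompleteSpace E]
    {f : E → ℝ} (hconv : ConvexOn ℝ Set.univ f) (hdiff : ∀ x, DifferentiableAt ℝ f x)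
    (x y : E) : f x + (inner ℝ (gradient f x) (y - x) : ℝ) ≤ f y := by
  have hg : ConvexOn ℝ Set.univ (fun t : ℝ => f (AffineMap.lineMap x y t)) := by
    have := hconv.comp_affineMap (AffineMap.lineMap x y : ℝ →ᵃ[ℝ] E)
    exact this
  have hfd : HasFDerivAt f ((InnerProductSpace.toDualMap ℝ E) (gradient f x) :
      E →L[ℝ] ℝ) x := by
    have := (hdiff x).hasGradientAt
    rwa [hasGradientAt_iff_hasFDerivAt] at this
  have hline : HasDerivAt (fun t : ℝ => AffineMap.lineMap x y t) (y - x) 0 := by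
    simp only [AffineMap.lineMap_apply, vsub_eq_sub, vadd_eq_add]
    simpa using ((hasDerivAt_id (0:ℝ)).smul_const (y - x)).add_const x
  have hcomp : HasDerivAt (fun t : ℝ => f (AffineMap.lineMap x y t))
      (inner ℝ (gradient f x) (y - x) : ℝ) 0 := by
    have hfd' : HasFDerivAt f ((InnerProductSpace.toDualMap ℝ E) (gradient f x) :
        E →L[ℝ] ℝ) (AffineMap.lineMap x y (0:ℝ)) := by simpa using hfd
    have := hfd'.comp_hasDerivAt (0:ℝ) hline
    exact this
  have hsl := hg.le_slope_of_hasDerivAt (Set.mem_univ 0) (Set.mem_univ 1)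
    zero_lt_one hcomp
  simp [slope, Function.comp] at hsl
  simp at ⊢
  linarith

/-- Theorem 3 of the paper: for a convex continuously differentiable
function `f : ℝ^d → ℝ` with Bregman divergence `D`, a σ-finite measure `ν` on `ℝ^d`,
and the sets `F m = {z | ∫ exp(-m·D(z,x)) dν(x) < ∞}`: if `0 < m ≤ n`, `x₁ ∈ F m` and
`x₀` is arbitrary, then `(1 - m/n)·x₀ + (m/n)·x₁ ∈ F n`. -/
theorem finiteness_sets_mixture {d : ℕ}
    (f : EuclideanSpace ℝ (Fin d) → ℝ)
    (hconv : ConvexOn ℝ Set.univ f) (hf : ContDiff ℝ 1 f)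
    (D : EuclideanSpace ℝ (Fin d) → EuclideanSpace ℝ (Fin d) → ℝ)
    (hD : ∀ x y, D x y = f x - f y - (inner ℝ (gradient f y) (x - y) : ℝ))
    (ν : Measure (EuclideanSpace ℝ (Fin d))) [SigmaFinite ν]
    (F : ℝ → Set (EuclideanSpace ℝ (Fin d)))
    (hF : ∀ m, F m = {z | ∫⁻ x, ENNReal.ofReal (Real.exp (-(m * D z x))) ∂ν < ⊤})
    (m n : ℝ) (hm : 0 < m) (hmn : m ≤ n)
    (x₀ x₁ : EuclideanSpace ℝ (Fin d)) (hx₁ : x₁ ∈ F m) :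
    (1 - m / n) • x₀ + (m / n) • x₁ ∈ F n := by
  have hn : 0 < n := lt_of_lt_of_le hm hmn
  have hn' : n ≠ 0 := hn.ne'
  have hnm : (0:ℝ) ≤ n - m := sub_nonneg.mpr hmn
  have hdiff : ∀ x, DifferentiableAt ℝ f x := fun x =>
    (hf.differentiable one_ne_zero).differentiableAt
  rw [hF] at hx₁ ⊢
  rw [Set.mem_setOf_eq] at hx₁ ⊢
  set z : EuclideanSpace ℝ (Fin d) := (1 - m / n) • x₀ + (m / n) • x₁ with hz
  set K : ℝ := m * f x₁ + (n - m) * f x₀ - n * f z with hK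
  have key : ∀ x, m * D x₁ x - K ≤ n * D z x := by
    intro x
    have hgi := convex_grad_ineq hconv hdiff x x₀
    have hv : (n:ℝ) • (z - x) = (n - m) • (x₀ - x) + m • (x₁ - x) := by
      rw [hz]
      match_scalars <;> (field_simp; try ring)
    have hinner : n * (inner ℝ (gradient f x) (z - x) : ℝ)
        = (n - m) * (inner ℝ (gradient f x) (x₀ - x) : ℝ)
          + m * (inner ℝ (gradient f x) (x₁ - x) : ℝ) := by
      rw [← real_inner_smul_right, ← real_inner_smul_right, ← real_inner_smul_right,
        ← inner_add_right, hv]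
    have hid : n * D z x - (m * D x₁ x - K)
        = (n - m) * (f x₀ - (f x + (inner ℝ (gradient f x) (x₀ - x) : ℝ))) := by
      rw [hD, hD, hK]
      linear_combination -hinner
    have hpos : (0:ℝ) ≤ (n - m) * (f x₀ - (f x + (inner ℝ (gradient f x) (x₀ - x) : ℝ))) :=
      mul_nonneg hnm (by linarith)
    linarith
  calc ∫⁻ x, ENNReal.ofReal (Real.exp (-(n * D z x))) ∂ν
      ≤ ∫⁻ x, ENNReal.ofReal (Real.exp K) * ENNReal.ofReal (Real.exp (-(m * D x₁ x))) ∂ν := by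
        refine lintegral_mono fun x => ?_
        rw [← ENNReal.ofReal_mul (Real.exp_nonneg K), ← Real.exp_add]
        exact ENNReal.ofReal_le_ofReal (Real.exp_le_exp.mpr (by linarith [key x]))
    _ = ENNReal.ofReal (Real.exp K) * ∫⁻ x, ENNReal.ofReal (Real.exp (-(m * D x₁ x))) ∂ν :=
        lintegral_const_mul' _ _ ENNReal.ofReal_ne_top
    _ < ⊤ := ENNReal.mul_lt_top ENNReal.ofReal_lt_top hx₁
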